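/- Let α ∈ [0,2] be real, set t := √((4 − α²)/(4 + α²)), μ := arctan(t), θ := (1/2)·arcsin(t). In ℂ² ⊗ ℂ² (equivalently, using 4×4 matrices via Kronecker products), let ψ := cos(θ)·(e₀ ⊗ e₀) + sin(θ)·(e₁ ⊗ e₁), where e₀, e₁ is the standard basis of ℂ², and define the 2×2 Hermitian matrices A₀ := σ_z, A₁ := σ_x, B₀ := cos(μ)·σ_z + sin(μ)·σ_x, B₁ := cos(μ)·σ_z − sin(μ)·σ_x, where σ_z and σ_x are the Pauli matrices. Then ⟨ψ, (α·(A₀ ⊗ I₂) + A₀ ⊗ B₀ + A₀ ⊗ B₁ + A₁ ⊗ B₀ − A₁ ⊗ B₁) ψ⟩ = √(8 + 2α²). -/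

import Mathlib

open Matrix Kronecker

lemma key10 (α t μ θ : ℝ) (h0 : 0 ≤ α) (h2 : α ≤ 2)
    (ht : t = Real.sqrt ((4 - α ^ 2) / (4 + α ^ 2)))
    (hμ : μ = Real.arctan t)
    (hθ : θ = (1 / 2) * Real.arcsin t) :
    α * Real.cos θ ^ 2 - α * Real.sin θ ^ 2 + 2 * Real.cos μ * Real.cos θ ^ 2
      + 2 * Real.cos μ * Real.sin θ ^ 2 + 4 * Real.sin μ * Real.sin θ * Real.cos θ
      = Real.sqrt (8 + 2 * α ^ 2) := by
  have hD : (0:ℝ) < 4 + α ^ 2 := by positivity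
  have hnum : (0:ℝ) ≤ 4 - α ^ 2 := by nlinarith
  have ht2 : t ^ 2 = (4 - α ^ 2) / (4 + α ^ 2) := by
    rw [ht, Real.sq_sqrt (by positivity)]
  have ht0 : 0 ≤ t := ht ▸ Real.sqrt_nonneg _
  have ht1 : t ≤ 1 := by nlinarith [div_le_one_of_le₀ (by nlinarith : (4 - α^2) ≤ 4 + α^2) hD.le]
  set r := Real.sqrt (4 + α ^ 2) with hr
  have hr2 : r ^ 2 = 4 + α ^ 2 := Real.sq_sqrt hD.le
  have hrpos : 0 < r := Real.sqrt_pos.mpr hD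
  have s2 : Real.sqrt 2 ^ 2 = 2 := Real.sq_sqrt (by norm_num)
  have s2pos : (0:ℝ) < Real.sqrt 2 := by positivity
  have hsin2 : 2 * Real.sin θ * Real.cos θ = t := by
    have h := Real.sin_two_mul θ
    rw [hθ, show 2 * (1/2 * Real.arcsin t) = Real.arcsin t by ring,
      Real.sin_arcsin (by linarith) ht1] at h
    rw [hθ]; linarith
  have hcos2 : Real.cos θ ^ 2 - Real.sin θ ^ 2 = Real.sqrt (1 - t ^ 2) := by
    have h := Real.cos_two_mul' θ
    rw [hθ, show 2 * (1/2 * Real.arcsin t) = Real.arcsin t by ring, Real.cos_arcsin] at h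
    rw [hθ, ← h]
  have hpyth : Real.cos θ ^ 2 + Real.sin θ ^ 2 = 1 := Real.cos_sq_add_sin_sq θ
  have hcosμ : Real.cos μ = 1 / Real.sqrt (1 + t ^ 2) := by rw [hμ, Real.cos_arctan]
  have hsinμ : Real.sin μ = t / Real.sqrt (1 + t ^ 2) := by rw [hμ, Real.sin_arctan]
  have e1 : Real.sqrt (1 - t ^ 2) = Real.sqrt 2 * α / r := by
    rw [show 1 - t ^ 2 = (Real.sqrt 2 * α / r) ^ 2 by
      rw [div_pow, mul_pow, s2, hr2, ht2]; field_simp; ring]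
    exact Real.sqrt_sq (by positivity)
  have e2 : Real.sqrt (1 + t ^ 2) = 2 * Real.sqrt 2 / r := by
    rw [show 1 + t ^ 2 = (2 * Real.sqrt 2 / r) ^ 2 by
      rw [div_pow, mul_pow, s2, hr2, ht2]; field_simp; ring]
    exact Real.sqrt_sq (by positivity)
  have e3 : Real.sqrt (8 + 2 * α ^ 2) = Real.sqrt 2 * r := by
    rw [show 8 + 2 * α ^ 2 = (Real.sqrt 2 * r) ^ 2 by rw [mul_pow, s2, hr2]; ring]
    exact Real.sqrt_sq (by positivity)
  rw [e3, hcosμ, hsinμ, e2]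
  have key : α * (Real.cos θ ^ 2 - Real.sin θ ^ 2) + 2 * (1 / (2 * Real.sqrt 2 / r))
      + 2 * (t / (2 * Real.sqrt 2 / r)) * t = Real.sqrt 2 * r := by
    rw [hcos2, e1]
    have hD' : t ^ 2 * (4 + α ^ 2) = 4 - α ^ 2 := by rw [ht2]; field_simp
    field_simp
    linear_combination (α ^ 2 - r ^ 2) * s2 + (t ^ 2 - 1) * hr2 + hD'
  linear_combination key + (2 / (2 * Real.sqrt 2 / r)) * hpyth + (2 * t / (2 * Real.sqrt 2 / r)) * hsin2


/-- The state `|ψ(θ)⟩ = cos θ|00⟩ + sin θ|11⟩` together with measurements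
`A₀ = σ_z`, `A₁ = σ_x`, `B₀ = cos μ σ_z + sin μ σ_x`, `B₁ = cos μ σ_z − sin μ σ_x`
attains the maximal quantum value `√(8 + 2α²)` of the tilted Bell operator. -/
theorem stmt_10 (α : ℝ) (hα : α ∈ Set.Icc (0 : ℝ) 2)
    (t μ θ : ℝ)
    (ht : t = Real.sqrt ((4 - α ^ 2) / (4 + α ^ 2)))
    (hμ : μ = Real.arctan t)
    (hθ : θ = (1 / 2) * Real.arcsin t)
    (σz σx : Matrix (Fin 2) (Fin 2) ℂ)
    (hσz : σz = !![1, 0; 0, -1]) (hσx : σx = !![0, 1; 1, 0])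
    (A₀ A₁ B₀ B₁ : Matrix (Fin 2) (Fin 2) ℂ)
    (hA₀ : A₀ = σz) (hA₁ : A₁ = σx)
    (hB₀ : B₀ = (Real.cos μ : ℂ) • σz + (Real.sin μ : ℂ) • σx)
    (hB₁ : B₁ = (Real.cos μ : ℂ) • σz - (Real.sin μ : ℂ) • σx)
    (e : Fin 2 → Fin 2 → ℂ) (he : e = fun i => Pi.single i 1)
    (ψ : Fin 2 × Fin 2 → ℂ)
    (hψ : ψ = fun p => (Real.cos θ : ℂ) * (e 0 p.1 * e 0 p.2)
        + (Real.sin θ : ℂ) * (e 1 p.1 * e 1 p.2)) :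
    star ψ ⬝ᵥ
      (((α : ℂ) • (A₀ ⊗ₖ (1 : Matrix (Fin 2) (Fin 2) ℂ))
          + A₀ ⊗ₖ B₀ + A₀ ⊗ₖ B₁ + A₁ ⊗ₖ B₀ - A₁ ⊗ₖ B₁) *ᵥ ψ)
      = (Real.sqrt (8 + 2 * α ^ 2) : ℂ) := by
  obtain ⟨h0, h2⟩ := hα
  subst hψ he hB₀ hB₁ hA₀ hA₁ hσz hσx
  simp only [dotProduct, Matrix.mulVec, Fintype.sum_prod_type, Fin.sum_univ_succ,
    Fin.sum_univ_zero, Matrix.kroneckerMap_apply, Matrix.one_apply, Matrix.add_apply,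
    Matrix.sub_apply, Matrix.smul_apply, Matrix.cons_val', Matrix.cons_val_zero,
    Matrix.cons_val_one, Matrix.head_cons, Matrix.head_fin_const, Matrix.empty_val',
    Matrix.cons_val_fin_one, Pi.star_apply, Pi.single, Function.update, smul_eq_mul]
  norm_num
  simp only [← Complex.ofReal_cos, ← Complex.ofReal_sin, Complex.conj_ofReal]
  have h := key10 α t μ θ h0 h2 ht hμ hθ
  norm_cast
  linear_combination h
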